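/- There exists a countable example space X and a countable class H ⊆ {0,1}^X satisfying the UUS property that is non-uniformly generatable but not uniformly generatable. Concretely, X = ℤ and H = H^e ∪ H^o (indicator classes from finite blocks A_d together with negative evens E or negative odds O respectively) works: H is countable hence non-uniformly generatable, but C(H) = ∞ hence not uniformly generatable. -/
import Mathlib


open Set

variable {X : Type*}

/-- The set of distinct examples seen in the first `t` steps of the stream `x`. -/
def seenSet (x : ℕ → X) (t : ℕ) : Set X := x '' {i | i < t}

/-- The finite prefix `x₁, ..., x_t` of the stream, as a list. -/
def prefList (x : ℕ → X) (t : ℕ) : List X := List.ofFn (fun i : Fin t => x i)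

/-- The version space of `H` induced by the positive examples `S`. -/
def versionSpace (H : Set (Set X)) (S : Set X) : Set (Set X) := {h | h ∈ H ∧ S ⊆ h}

/-- The closure `⟨S⟩_H`: common positive examples of all consistent hypotheses. -/
def hclosure (H : Set (Set X)) (S : Set X) : Set X := ⋂₀ versionSpace H S

/-- There exist `d` distinct examples with nonempty version space and finite closure. -/
def FinClosureWitness (H : Set (Set X)) (d : ℕ) : Prop :=
  ∃ S : Finset X, S.card = d ∧ (versionSpace H ↑S).Nonempty ∧ (hclosure H ↑S).Finite

/-- The Closure dimension of `H` is infinite. -/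
def ClosureDimInf (H : Set (Set X)) : Prop := ∀ n : ℕ, ∃ d, n ≤ d ∧ FinClosureWitness H d

/-- The Closure dimension of `H` is at most `d`. -/
def ClosureDimLE (H : Set (Set X)) (d : ℕ) : Prop := ∀ d', d < d' → ¬ FinClosureWitness H d'

/-- Uniformly Unbounded Support property. -/
def UUS (H : Set (Set X)) : Prop := ∀ h ∈ H, h.Infinite

/-- The generator `G` outputs an unseen positive example of `h` at step `s`. -/
def GenOK (G : List X → X) (h : Set X) (x : ℕ → X) (s : ℕ) : Prop :=
  G (prefList x s) ∈ h \ seenSet x s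

def UniformlyGeneratable (H : Set (Set X)) : Prop :=
  ∃ G : List X → X, ∃ d : ℕ, ∀ h ∈ H, ∀ x : ℕ → X, (∀ i, x i ∈ h) →
    ∀ t, (seenSet x t).ncard = d → ∀ s, t ≤ s → GenOK G h x s

def NonUniformlyGeneratable (H : Set (Set X)) : Prop :=
  ∃ G : List X → X, ∀ h ∈ H, ∃ d : ℕ, ∀ x : ℕ → X, (∀ i, x i ∈ h) →
    ∀ t, (seenSet x t).ncard = d → ∀ s, t ≤ s → GenOK G h x s

/-- `x` is an enumeration of the support `h`. -/
def IsEnum (h : Set X) (x : ℕ → X) : Prop := (∀ i, x i ∈ h) ∧ ∀ y ∈ h, ∃ i, x i = y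

def GeneratableInLimit (H : Set (Set X)) : Prop :=
  ∃ G : List X → X, ∀ h ∈ H, ∀ x : ℕ → X, IsEnum h x →
    ∃ t, ∀ s, t ≤ s → GenOK G h x s

/-- The block `A_d = {d(d-1)/2 + 1, ..., d(d-1)/2 + d}` as a subset of `ℤ`. -/
def Ablock (d : ℕ) : Set ℤ :=
  {x : ℤ | (d : ℤ) * ((d : ℤ) - 1) / 2 + 1 ≤ x ∧ x ≤ (d : ℤ) * ((d : ℤ) - 1) / 2 + (d : ℤ)}

/-- The negative even integers. -/
def Eneg : Set ℤ := {x : ℤ | x < 0 ∧ Even x}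

/-- The negative odd integers. -/
def Oneg : Set ℤ := {x : ℤ | x < 0 ∧ Odd x}

/-- `H^e = {x ↦ 1[x ∈ A_d ∪ E] : d ∈ ℕ}`. -/
def He : Set (Set ℤ) := {h | ∃ d : ℕ, 1 ≤ d ∧ h = Ablock d ∪ Eneg}

/-- `H^o = {x ↦ 1[x ∈ A_d ∪ O] : d ∈ ℕ}`. -/
def Ho : Set (Set ℤ) := {h | ∃ d : ℕ, 1 ≤ d ∧ h = Ablock d ∪ Oneg}

/-- `H = H^e ∪ H^o`. -/
def Hblocks : Set (Set ℤ) := He ∪ Ho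

/-! ### Auxiliary lemmas -/

lemma mem_prefList_iff {x : ℕ → ℤ} {s : ℕ} {a : ℤ} :
    a ∈ prefList x s ↔ ∃ i < s, x i = a := by
  simp [prefList, List.mem_ofFn]
  constructor
  · rintro ⟨⟨i, hi⟩, rfl⟩; exact ⟨i, hi, rfl⟩
  · rintro ⟨i, hi, rfl⟩; exact ⟨⟨i, hi⟩, rfl⟩

lemma mem_seenSet_iff {x : ℕ → ℤ} {s : ℕ} {a : ℤ} :
    a ∈ seenSet x s ↔ ∃ i < s, x i = a := by
  simp [seenSet]

/-- Max of absolute values of a list of integers. -/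
def maxAbsL (L : List ℤ) : ℕ := L.foldr (fun a m => max a.natAbs m) 0

lemma natAbs_le_maxAbsL {a : ℤ} {L : List ℤ} (h : a ∈ L) : a.natAbs ≤ maxAbsL L := by
  induction L with
  | nil => simp at h
  | cons b t ih =>
    rcases List.mem_cons.1 h with rfl | h
    · simp [maxAbsL]
    · simp only [maxAbsL, List.foldr_cons]
      exact le_trans (ih h) (le_max_right _ _)

/-- The generator: output a fresh negative even number if a negative even number has been
seen, otherwise a fresh negative odd number. -/
def Ggen (L : List ℤ) : ℤ :=
  if L.any (fun a => decide (a < 0 ∧ a % 2 = 0)) then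
    -(2 * (maxAbsL L : ℤ) + 2)
  else
    -(2 * (maxAbsL L : ℤ) + 3)

lemma Ablock_eq (d : ℕ) :
    Ablock d = Set.Icc ((d : ℤ) * ((d : ℤ) - 1) / 2 + 1) ((d : ℤ) * ((d : ℤ) - 1) / 2 + d) := rfl

lemma Ablock_finite (d : ℕ) : (Ablock d).Finite := by
  rw [Ablock_eq]; exact Set.finite_Icc _ _

lemma Ablock_ncard (d : ℕ) : (Ablock d).ncard = d := by
  rw [Ablock_eq, ← Finset.coe_Icc, Set.ncard_coe_finset, Int.card_Icc]
  omega

lemma Ablock_pos {d : ℕ} {x : ℤ} (h : x ∈ Ablock d) : 1 ≤ x := by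
  have h0 : 0 ≤ (d : ℤ) * ((d : ℤ) - 1) := by
    rcases Nat.eq_zero_or_pos d with hd | hd
    · subst hd; norm_num
    · have : (1 : ℤ) ≤ d := by exact_mod_cast hd
      nlinarith
  have := Int.ediv_nonneg h0 (by norm_num : (0:ℤ) ≤ 2)
  have h1 := h.1
  omega

lemma Eneg_infinite : Eneg.Infinite := by
  apply Set.infinite_of_injective_forall_mem (f := fun n : ℕ => -2 * ((n : ℤ) + 1))
  · intro a b hab; simp only at hab; omega
  · intro n; exact ⟨by omega, ⟨-((n:ℤ)+1), by ring⟩⟩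

lemma Oneg_infinite : Oneg.Infinite := by
  apply Set.infinite_of_injective_forall_mem (f := fun n : ℕ => -(2 * (n : ℤ) + 1))
  · intro a b hab; simp only at hab; omega
  · intro n; exact ⟨by omega, ⟨-((n:ℤ)+1), by ring⟩⟩

lemma countable_Hblocks : Hblocks.Countable := by
  have hsub : Hblocks ⊆ Set.range
      (fun p : ℕ × Bool => if p.2 then Ablock p.1 ∪ Eneg else Ablock p.1 ∪ Oneg) := by
    rintro h (⟨d, _, rfl⟩ | ⟨d, _, rfl⟩)
    · exact ⟨(d, true), rfl⟩
    · exact ⟨(d, false), rfl⟩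
  exact Set.Countable.mono hsub (Set.countable_range _)

lemma uus_Hblocks : UUS Hblocks := by
  rintro h (⟨d, _, rfl⟩ | ⟨d, _, rfl⟩)
  · exact (Eneg_infinite.mono Set.subset_union_right)
  · exact (Oneg_infinite.mono Set.subset_union_right)

lemma Ggen_not_seen {x : ℕ → ℤ} {s : ℕ} :
    Ggen (prefList x s) ∉ seenSet x s := by
  intro hmem
  rw [mem_seenSet_iff] at hmem
  obtain ⟨i, hi, hxi⟩ := hmem
  have hL : x i ∈ prefList x s := mem_prefList_iff.2 ⟨i, hi, rfl⟩
  have hle := natAbs_le_maxAbsL hL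
  unfold Ggen at hxi
  split at hxi <;> omega

lemma nonUniform_Hblocks : NonUniformlyGeneratable Hblocks := by
  refine ⟨Ggen, ?_⟩
  rintro h (⟨d, hd, rfl⟩ | ⟨d, hd, rfl⟩)
  · -- even case: threshold d + 1 forces a seen negative even number
    refine ⟨d + 1, ?_⟩
    intro x hx t ht s hts
    -- there is i < t with x i ∈ Eneg
    have hEx : ∃ i < t, x i ∈ Eneg := by
      by_contra hcon
      push_neg at hcon
      have hsub : seenSet x t ⊆ Ablock d := by
        intro a ha
        rw [mem_seenSet_iff] at ha
        obtain ⟨i, hi, rfl⟩ := ha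
        rcases hx i with h' | h'
        · exact h'
        · exact absurd h' (hcon i hi)
      have := Set.ncard_le_ncard hsub (Ablock_finite d)
      rw [Ablock_ncard, ht] at this
      omega
    obtain ⟨i, hi, hEi⟩ := hEx
    have hL : x i ∈ prefList x s := mem_prefList_iff.2 ⟨i, lt_of_lt_of_le hi hts, rfl⟩
    have hany : (prefList x s).any (fun a => decide (a < 0 ∧ a % 2 = 0)) = true := by
      rw [List.any_eq_true]
      refine ⟨x i, hL, ?_⟩
      simp only [decide_eq_true_eq]
      exact ⟨hEi.1, Int.even_iff.1 hEi.2⟩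
    constructor
    · show Ggen (prefList x s) ∈ Ablock d ∪ Eneg
      right
      unfold Ggen
      rw [if_pos hany]
      exact ⟨by omega, ⟨-((maxAbsL (prefList x s) : ℤ) + 1), by ring⟩⟩
    · exact Ggen_not_seen
  · -- odd case: every stream element is positive or negative odd, so the test fails
    refine ⟨d + 1, ?_⟩
    intro x hx t ht s hts
    have hany : (prefList x s).any (fun a => decide (a < 0 ∧ a % 2 = 0)) = false := by
      rw [List.any_eq_false]
      intro a haL
      obtain ⟨i, _, rfl⟩ := mem_prefList_iff.1 haL
      simp only [decide_eq_true_eq, not_and]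
      intro ha0
      rcases hx i with h' | h'
      · have := Ablock_pos h'
        omega
      · have := Int.odd_iff.1 h'.2
        omega
    constructor
    · show Ggen (prefList x s) ∈ Ablock d ∪ Oneg
      right
      unfold Ggen
      rw [if_neg (by rw [hany]; simp)]
      exact ⟨by omega, ⟨-((maxAbsL (prefList x s) : ℤ) + 2), by ring⟩⟩
    · exact Ggen_not_seen

lemma not_uniform_Hblocks : ¬ UniformlyGeneratable Hblocks := by
  rintro ⟨G, d, hG⟩
  rcases Nat.eq_zero_or_pos d with rfl | hd
  · -- d = 0: G [] must lie in three incompatible hypotheses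
    have h1e : Ablock 1 ∪ Eneg ∈ Hblocks := Or.inl ⟨1, le_refl _, rfl⟩
    have h1o : Ablock 1 ∪ Oneg ∈ Hblocks := Or.inr ⟨1, le_refl _, rfl⟩
    have h2e : Ablock 2 ∪ Eneg ∈ Hblocks := Or.inl ⟨2, by norm_num, rfl⟩
    have hseen0 : ∀ x : ℕ → ℤ, (seenSet x 0).ncard = 0 := by
      intro x; simp [seenSet]
    have hpref0 : ∀ x : ℕ → ℤ, prefList x 0 = [] := by
      intro x; simp [prefList]
    have g1e := hG _ h1e (fun _ => -2) (fun _ => Or.inr ⟨by norm_num, ⟨-1, by ring⟩⟩)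
      0 (hseen0 _) 0 le_rfl
    have g1o := hG _ h1o (fun _ => -1) (fun _ => Or.inr ⟨by norm_num, ⟨-1, by ring⟩⟩)
      0 (hseen0 _) 0 le_rfl
    have g2e := hG _ h2e (fun _ => -2) (fun _ => Or.inr ⟨by norm_num, ⟨-1, by ring⟩⟩)
      0 (hseen0 _) 0 le_rfl
    rw [GenOK, hpref0] at g1e g1o g2e
    have m1e := g1e.1
    have m1o := g1o.1
    have m2e := g2e.1
    set z := G [] with hz
    have hz1 : z ∈ Ablock 1 := by
      rcases m1e with h | h
      · exact h
      · rcases m1o with h' | h'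
        · exact h'
        · exact absurd (Int.even_iff.1 h.2) (by have := Int.odd_iff.1 h'.2; omega)
    have hz2 : z ∈ Ablock 2 ∨ z ∈ Eneg := m2e
    have hA1 : z = 1 := by
      obtain ⟨u, v⟩ := hz1
      norm_num [Ablock] at u v
      omega
    rcases hz2 with h | h
    · obtain ⟨u, v⟩ := h
      norm_num [Ablock] at u v
      omega
    · have := h.1; omega
  · -- d ≥ 1: enumerate the block A_d, then G must produce a fresh element of A_d
    obtain ⟨c, hc⟩ : ∃ c : ℤ, c = (d : ℤ) * ((d : ℤ) - 1) / 2 := ⟨_, rfl⟩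
    set x : ℕ → ℤ := fun i => c + 1 + (min i (d - 1) : ℕ) with hxdef
    have hxA : ∀ i, x i ∈ Ablock d := by
      intro i
      have h1 : min i (d - 1) ≤ d - 1 := min_le_right _ _
      simp only [Ablock, Set.mem_setOf_eq, ← hc, hxdef]
      omega
    have hseen : seenSet x d = Ablock d := by
      ext y
      rw [mem_seenSet_iff]
      constructor
      · rintro ⟨i, hi, rfl⟩; exact hxA i
      · intro hy
        simp only [Ablock, Set.mem_setOf_eq, ← hc] at hy
        refine ⟨(y - (c + 1)).toNat, by omega, ?_⟩
        simp only [hxdef]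
        omega
    have hncard : (seenSet x d).ncard = d := by rw [hseen]; exact Ablock_ncard d
    have hhe : Ablock d ∪ Eneg ∈ Hblocks := Or.inl ⟨d, hd, rfl⟩
    have hho : Ablock d ∪ Oneg ∈ Hblocks := Or.inr ⟨d, hd, rfl⟩
    have ge := hG _ hhe x (fun i => Or.inl (hxA i)) d hncard d le_rfl
    have go := hG _ hho x (fun i => Or.inl (hxA i)) d hncard d le_rfl
    rw [GenOK] at ge go
    set z := G (prefList x d) with hz
    have hnotseen : z ∉ Ablock d := by rw [← hseen]; exact ge.2
    rcases ge.1 with h | h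
    · exact hnotseen h
    · rcases go.1 with h' | h'
      · exact hnotseen h'
      · have h2 := Int.even_iff.1 h.2
        have h3 := Int.odd_iff.1 h'.2
        omega
/-- a countable UUS class that is non-uniformly generatable but
not uniformly generatable. -/
theorem stmt10 :
    Hblocks.Countable ∧ UUS Hblocks ∧
    NonUniformlyGeneratable Hblocks ∧ ¬ UniformlyGeneratable Hblocks := by
  exact ⟨countable_Hblocks, uus_Hblocks, nonUniform_Hblocks, not_uniform_Hblocks⟩
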